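/- Let p be a prime. Every g ∈ SL₂(ℤ_p) can be written as g = n(b)·m(a)·γ·k with b ∈ ℤ_p, a ∈ ℤ_p^×, k ∈ K(p), and γ an element of the set {1} ∪ {w·n(j) : j = 0, 1, …, p−1}. Moreover, γ is uniquely determined by g: the p+1 double cosets N(ℤ_p)M(ℤ_p)·γ·K(p), for γ ranging over {1} ∪ {w·n(j) : 0 ≤ j ≤ p−1}, are pairwise disjoint. -/

import Mathlib

open Matrix

variable (p : ℕ) [Fact p.Prime]

/-- The element `n(b) = [[1, b], [0, 1]]` of `SL₂(ℤ_p)`. -/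
noncomputable def nElt (b : ℤ_[p]) : Matrix.SpecialLinearGroup (Fin 2) ℤ_[p] :=
  ⟨!![1, b; 0, 1], by simp [Matrix.det_fin_two_of]⟩

/-- The element `m(a) = [[a, 0], [0, a⁻¹]]` of `SL₂(ℤ_p)` for a unit `a`. -/
noncomputable def mElt (a : ℤ_[p]ˣ) : Matrix.SpecialLinearGroup (Fin 2) ℤ_[p] :=
  ⟨!![(a : ℤ_[p]), 0; 0, ((a⁻¹ : ℤ_[p]ˣ) : ℤ_[p])], by
    simp [Matrix.det_fin_two_of]⟩

/-- The element `w = [[0, 1], [-1, 0]]` of `SL₂(ℤ_p)`. -/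
noncomputable def wElt : Matrix.SpecialLinearGroup (Fin 2) ℤ_[p] :=
  ⟨!![0, 1; -1, 0], by simp [Matrix.det_fin_two_of]⟩

/-- The principal congruence subgroup `K(p)` of level `p`: matrices congruent to the
identity modulo `p`. -/
def Kp : Set (Matrix.SpecialLinearGroup (Fin 2) ℤ_[p]) :=
  {g | ∀ i j, (p : ℤ_[p]) ∣
    ((g : Matrix (Fin 2) (Fin 2) ℤ_[p]) i j - (1 : Matrix (Fin 2) (Fin 2) ℤ_[p]) i j)}

/-- The set of representatives `{1} ∪ {w n(j) : 0 ≤ j ≤ p-1}`. -/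
noncomputable def reps : Set (Matrix.SpecialLinearGroup (Fin 2) ℤ_[p]) :=
  {γ | γ = 1 ∨ ∃ j : ℕ, j < p ∧ γ = wElt p * nElt p (j : ℤ_[p])}

lemma dvd_iff_toZMod (x : ℤ_[p]) : (p : ℤ_[p]) ∣ x ↔ PadicInt.toZMod x = 0 := by
  rw [← Ideal.mem_span_singleton, ← PadicInt.maximalIdeal_eq_span_p,
    ← PadicInt.ker_toZMod, RingHom.mem_ker]
lemma isUnit_iff_toZMod (x : ℤ_[p]) : IsUnit x ↔ PadicInt.toZMod x ≠ 0 := by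
  rw [Ne, ← dvd_iff_toZMod, ← Ideal.mem_span_singleton, ← PadicInt.maximalIdeal_eq_span_p]
  exact ⟨fun h h2 => (IsLocalRing.mem_maximalIdeal x).mp h2 h,
    fun h => by_contra fun h2 => h ((IsLocalRing.mem_maximalIdeal x).mpr h2)⟩
noncomputable def red : Matrix.SpecialLinearGroup (Fin 2) ℤ_[p] →*
    Matrix.SpecialLinearGroup (Fin 2) (ZMod p) :=
  Matrix.SpecialLinearGroup.map (PadicInt.toZMod)
lemma mem_Kp_iff (k : Matrix.SpecialLinearGroup (Fin 2) ℤ_[p]) :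
    k ∈ Kp p ↔ red p k = 1 := by
  constructor
  · intro h
    ext i j
    have h2 := (dvd_iff_toZMod p _).mp (h i j)
    rw [map_sub, sub_eq_zero] at h2
    simpa [red, Matrix.SpecialLinearGroup.map_apply_coe, Matrix.one_apply,
      apply_ite (PadicInt.toZMod)] using h2
  · intro h i j
    have h2 : PadicInt.toZMod ((k : Matrix (Fin 2) (Fin 2) ℤ_[p]) i j) =
        (1 : Matrix (Fin 2) (Fin 2) (ZMod p)) i j := by
      have h3 : ((red p k : Matrix.SpecialLinearGroup (Fin 2) (ZMod p)) :
          Matrix (Fin 2) (Fin 2) (ZMod p)) = (1 : Matrix (Fin 2) (Fin 2) (ZMod p)) := by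
        rw [h]; rfl
      have := congrFun (congrFun h3 i) j
      simpa [red, Matrix.SpecialLinearGroup.map_apply_coe] using this
    rw [dvd_iff_toZMod, map_sub, sub_eq_zero, h2]
    simp [Matrix.one_apply, apply_ite (PadicInt.toZMod)]
lemma coe_nmw (b : ℤ_[p]) (a : ℤ_[p]ˣ) (x : ℤ_[p]) :
    ((nElt p b * mElt p a * (wElt p * nElt p x)) : Matrix (Fin 2) (Fin 2) ℤ_[p]) =
    !![-(b * ((a⁻¹ : ℤ_[p]ˣ) : ℤ_[p])), (a : ℤ_[p]) - x * (b * ((a⁻¹ : ℤ_[p]ˣ) : ℤ_[p]));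
       -((a⁻¹ : ℤ_[p]ˣ) : ℤ_[p]), -(x * ((a⁻¹ : ℤ_[p]ˣ) : ℤ_[p]))] := by
  simp [nElt, mElt, wElt, Matrix.mul_fin_two]
  ring_nf
  exact ⟨trivial, trivial⟩

lemma coe_nm (b : ℤ_[p]) (a : ℤ_[p]ˣ) :
    ((nElt p b * mElt p a) : Matrix (Fin 2) (Fin 2) ℤ_[p]) =
    !![(a : ℤ_[p]), b * ((a⁻¹ : ℤ_[p]ˣ) : ℤ_[p]); 0, ((a⁻¹ : ℤ_[p]ˣ) : ℤ_[p])] := by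
  simp [nElt, mElt, Matrix.mul_fin_two]


lemma exists_decomp (g : Matrix.SpecialLinearGroup (Fin 2) ℤ_[p]) :
    ∃ (b : ℤ_[p]) (a : ℤ_[p]ˣ) (γ k : Matrix.SpecialLinearGroup (Fin 2) ℤ_[p]),
      γ ∈ reps p ∧ k ∈ Kp p ∧ g = nElt p b * mElt p a * γ * k := by
  have hdet : (g : Matrix (Fin 2) (Fin 2) ℤ_[p]) 0 0 * (g : Matrix (Fin 2) (Fin 2) ℤ_[p]) 1 1
      - (g : Matrix (Fin 2) (Fin 2) ℤ_[p]) 0 1 * (g : Matrix (Fin 2) (Fin 2) ℤ_[p]) 1 0 = 1 := by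
    rw [← Matrix.det_fin_two]; exact g.2
  set φ := (PadicInt.toZMod : ℤ_[p] →+* ZMod p) with hφ
  set α := (g : Matrix (Fin 2) (Fin 2) ℤ_[p]) 0 0
  set β := (g : Matrix (Fin 2) (Fin 2) ℤ_[p]) 0 1
  set c := (g : Matrix (Fin 2) (Fin 2) ℤ_[p]) 1 0
  set d := (g : Matrix (Fin 2) (Fin 2) ℤ_[p]) 1 1
  have hdet' : φ α * φ d - φ β * φ c = 1 := by
    have := congrArg φ hdet; push_cast at this; simpa using this
  by_cases hc : φ c = 0
  · -- γ = 1
    have hα : IsUnit α := by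
      rw [isUnit_iff_toZMod]
      intro h0
      rw [h0, hc] at hdet'; simp at hdet'
    refine ⟨β * α, hα.unit, 1, (nElt p (β * α) * mElt p hα.unit * 1)⁻¹ * g,
      Or.inl rfl, ?_, by group⟩
    rw [mem_Kp_iff, _root_.map_mul, map_inv]
    suffices h : red p (nElt p (β * α) * mElt p hα.unit * 1) = red p g by
      rw [h]; group
    have hα0 : φ α ≠ 0 := (isUnit_iff_toZMod p α).mp hα
    have had : φ α * φ d = 1 := by rw [← hdet', hc]; ring
    have hd : (φ α)⁻¹ = φ d := inv_eq_of_mul_eq_one_right had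
    apply Subtype.ext
    show Matrix.map _ φ = Matrix.map _ φ
    simp only [Matrix.SpecialLinearGroup.coe_mul, Matrix.SpecialLinearGroup.coe_one]
    ext i j
    fin_cases i <;> fin_cases j <;>
      simp [nElt, mElt, hα.unit_spec, Matrix.mul_fin_two, hd, hc,
        mul_inv_cancel_right₀ hα0]
    · rfl
    rw [mul_assoc, had, mul_one]
    · exact hc.symm
    · rfl
  · -- γ = w n(j)
    have hcU : IsUnit c := (isUnit_iff_toZMod p c).mpr hc
    set a : ℤ_[p]ˣ := -hcU.unit⁻¹ with ha
    set j : ℕ := (φ d * (φ c)⁻¹).val with hj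
    have hjp : j < p := ZMod.val_lt _
    refine ⟨-α * (a : ℤ_[p]), a, wElt p * nElt p (j : ℤ_[p]),
      (nElt p (-α * (a : ℤ_[p])) * mElt p a * (wElt p * nElt p (j : ℤ_[p])))⁻¹ * g,
      Or.inr ⟨j, hjp, rfl⟩, ?_, by group⟩
    rw [mem_Kp_iff, _root_.map_mul, map_inv]
    suffices h : red p (nElt p (-α * ↑a) * mElt p a * (wElt p * nElt p (j : ℤ_[p])))
        = red p g by rw [h]; group
    have hcoe : ((a : ℤ_[p]ˣ) : ℤ_[p]) = -((hcU.unit⁻¹ : ℤ_[p]ˣ) : ℤ_[p]) := by simp [ha]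
    have hcoeinv : ((a⁻¹ : ℤ_[p]ˣ) : ℤ_[p]) = -c := by simp [ha, hcU.unit_spec]
    have hjcast : ((j : ℕ) : ZMod p) = φ d * (φ c)⁻¹ := by
      rw [hj, ZMod.natCast_val, ZMod.cast_id]
    have huinv : φ ((hcU.unit⁻¹ : ℤ_[p]ˣ) : ℤ_[p]) = (φ c)⁻¹ := by
      rw [map_units_inv, hcU.unit_spec]
    apply Subtype.ext
    show Matrix.map _ φ = Matrix.map _ φ
    simp only [Matrix.SpecialLinearGroup.coe_mul]
    rw [coe_nmw]
    ext i j'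
    fin_cases i <;> fin_cases j' <;>
      simp [Matrix.map_apply, hcoe, hcoeinv, huinv, hjcast]
    · rw [mul_assoc, inv_mul_cancel₀ hc, mul_one]
    · show -(φ c)⁻¹ + φ d * (φ c)⁻¹ * (φ α * (φ c)⁻¹ * φ c) = φ β
      field_simp
      linear_combination hdet'
    · rfl
    · rw [mul_assoc, inv_mul_cancel₀ hc, mul_one]
lemma unique_aux {b₁ b₂ : ℤ_[p]} {a₁ a₂ : ℤ_[p]ˣ}
    {γ₁ γ₂ k₁ k₂ : Matrix.SpecialLinearGroup (Fin 2) ℤ_[p]}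
    (hk₁ : k₁ ∈ Kp p) (hk₂ : k₂ ∈ Kp p)
    (E : nElt p b₁ * mElt p a₁ * γ₁ * k₁ = nElt p b₂ * mElt p a₂ * γ₂ * k₂) (i j : Fin 2) :
    PadicInt.toZMod (((nElt p b₁ * mElt p a₁ * γ₁) : Matrix (Fin 2) (Fin 2) ℤ_[p]) i j) =
    PadicInt.toZMod (((nElt p b₂ * mElt p a₂ * γ₂) : Matrix (Fin 2) (Fin 2) ℤ_[p]) i j) := by
  have hE : red p (nElt p b₁ * mElt p a₁ * γ₁) = red p (nElt p b₂ * mElt p a₂ * γ₂) := by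
    have h := congrArg (red p) E
    simp only [_root_.map_mul, (mem_Kp_iff p k₁).mp hk₁,
      (mem_Kp_iff p k₂).mp hk₂, mul_one] at h
    simp only [_root_.map_mul]
    exact h
  have h2 := Subtype.ext_iff.mp hE
  simp only [red, Matrix.SpecialLinearGroup.map_apply_coe, RingHom.mapMatrix_apply] at h2
  exact congrFun (congrFun h2 i) j
lemma unit_ne_zero (a : ℤ_[p]ˣ) : PadicInt.toZMod ((a : ℤ_[p]ˣ) : ℤ_[p]) ≠ 0 :=
  (isUnit_iff_toZMod p _).mp a.isUnit
lemma uniqueness : ∀ γ₁ ∈ reps p, ∀ γ₂ ∈ reps p,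
    (∃ (b₁ b₂ : ℤ_[p]) (a₁ a₂ : ℤ_[p]ˣ) (k₁ k₂ : Matrix.SpecialLinearGroup (Fin 2) ℤ_[p]),
      k₁ ∈ Kp p ∧ k₂ ∈ Kp p ∧
        nElt p b₁ * mElt p a₁ * γ₁ * k₁ = nElt p b₂ * mElt p a₂ * γ₂ * k₂) →
    γ₁ = γ₂ := by
  rintro γ₁ hγ₁ γ₂ hγ₂ ⟨b₁, b₂, a₁, a₂, k₁, k₂, hk₁, hk₂, E⟩
  set φ := (PadicInt.toZMod : ℤ_[p] →+* ZMod p) with hφ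
  rcases hγ₁ with h1 | ⟨j₁, hj₁, rfl⟩ <;> rcases hγ₂ with h2 | ⟨j₂, hj₂, rfl⟩
  · rw [h1, h2]
  · -- γ₁ = 1, γ₂ = w n(j₂) : contradiction at entry (1,0)
    exfalso
    subst h1
    have h := unique_aux p hk₁ hk₂ E 1 0
    simp only [Matrix.SpecialLinearGroup.coe_mul, Matrix.SpecialLinearGroup.coe_one,
      mul_one] at h
    rw [coe_nm, coe_nmw] at h
    simp [map_units_inv] at h
    exact unit_ne_zero p a₂ h.symm.symm
  · exfalso
    subst h2
    have h := unique_aux p hk₁ hk₂ E 1 0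
    simp only [Matrix.SpecialLinearGroup.coe_mul, Matrix.SpecialLinearGroup.coe_one,
      mul_one] at h
    rw [coe_nmw, coe_nm] at h
    simp [map_units_inv] at h
    exact unit_ne_zero p a₁ h
  · have h10 := unique_aux p hk₁ hk₂ E 1 0
    have h11 := unique_aux p hk₁ hk₂ E 1 1
    simp only [Matrix.SpecialLinearGroup.coe_mul, coe_nmw] at h10 h11
    simp at h10 h11
    rw [h10] at h11
    have : (j₁ : ZMod p) = (j₂ : ZMod p) :=
      mul_right_cancel₀ (inv_ne_zero (unit_ne_zero p a₂)) h11
    have : j₁ = j₂ := by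
      have hv := congrArg ZMod.val this
      rwa [ZMod.val_cast_of_lt hj₁, ZMod.val_cast_of_lt hj₂] at hv
    rw [this]

/-- Every `g ∈ SL₂(ℤ_p)` can be written as `n(b) m(a) γ k` with `γ` in the set of
representatives `{1} ∪ {w n(j) : 0 ≤ j ≤ p-1}` and `k ∈ K(p)`; moreover the `p+1`
double cosets `N(ℤ_p)M(ℤ_p) γ K(p)` are pairwise disjoint. -/
theorem double_coset_decomposition :
    (∀ g : Matrix.SpecialLinearGroup (Fin 2) ℤ_[p],
      ∃ (b : ℤ_[p]) (a : ℤ_[p]ˣ) (γ k : Matrix.SpecialLinearGroup (Fin 2) ℤ_[p]),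
        γ ∈ reps p ∧ k ∈ Kp p ∧ g = nElt p b * mElt p a * γ * k) ∧
    (∀ γ₁ ∈ reps p, ∀ γ₂ ∈ reps p,
      (∃ (b₁ b₂ : ℤ_[p]) (a₁ a₂ : ℤ_[p]ˣ) (k₁ k₂ : Matrix.SpecialLinearGroup (Fin 2) ℤ_[p]),
        k₁ ∈ Kp p ∧ k₂ ∈ Kp p ∧
          nElt p b₁ * mElt p a₁ * γ₁ * k₁ = nElt p b₂ * mElt p a₂ * γ₂ * k₂) →
      γ₁ = γ₂) := by
  exact ⟨exists_decomp p, uniqueness p⟩
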